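/- With E_{m,n} and H_{m,n} as the counit and unit matrices of the self-adjunction of Kronecker product with m in Mat_F, for every m, n ≥ 1 the matrix E_{m,n} · H_{m,n} equals m · 1_n (m times the n × n identity matrix). -/

import Mathlib

/-- The "quotient" part of the 0-indexed decomposition `r = (r / b) * b + r % b`
of an index `r < a * b`. -/
def finDiv {a b : ℕ} (r : Fin (a * b)) : Fin a :=
  ⟨(r : ℕ) / b, Nat.div_lt_of_lt_mul (Nat.mul_comm a b ▸ r.isLt)⟩

/-- The "remainder" part of the 0-indexed decomposition `r = (r / b) * b + r % b`
of an index `r < a * b`. -/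
def finMod {a b : ℕ} (r : Fin (a * b)) : Fin b :=
  ⟨(r : ℕ) % b, Nat.mod_lt _ (Nat.pos_of_ne_zero (by
    rintro rfl
    exact absurd r.isLt (by simp)))⟩

variable {R : Type*}

/-- The Kronecker product of an `n × m` matrix and an `l × k` matrix, as an
`(n·l) × (m·k)` matrix: `(M ⊗ N)((i−1)l + p, (j−1)k + q) = M(i,j) · N(p,q)`. -/
def kron [Mul R] {n m l k : ℕ} (M : Matrix (Fin n) (Fin m) R)
    (N : Matrix (Fin l) (Fin k) R) : Matrix (Fin (n * l)) (Fin (m * k)) R :=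
  Matrix.of fun r c => M (finDiv r) (finDiv c) * N (finMod r) (finMod c)

/-- The commutation matrix `S_{m,n}`: the `nm × mn` 0-1 matrix with
`S_{m,n}((i−1)m + j, k) = δ(k, (j−1)n + i)` for `1 ≤ i ≤ n`, `1 ≤ j ≤ m`. -/
def commMatrix [Zero R] [One R] (m n : ℕ) : Matrix (Fin (n * m)) (Fin (m * n)) R :=
  Matrix.of fun r c => if (c : ℕ) = (finMod r : ℕ) * n + (finDiv r : ℕ) then 1 else 0

/-- The counit matrix `E_{m,n} = E_{m,1} ⊗ 1_n`, where `E_{m,1}` is the `1 × m²` matrix with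
`E_{m,1}(1, (i−1)m + j) = δ(i,j)`.  Concretely `E_{m,n}` is the `n × m²n` 0-1 matrix whose
entry at row `r` and column `((i−1)m + j − 1)n + s` is `δ(i,j)·δ(r,s)`. -/
def EMat [Zero R] [One R] (m n : ℕ) : Matrix (Fin n) (Fin (m * m * n)) R :=
  Matrix.of fun r c =>
    if ((c : ℕ) / n) / m = ((c : ℕ) / n) % m ∧ (c : ℕ) % n = (r : ℕ) then 1 else 0

/-- The unit matrix `H_{m,n}`, the transpose of `E_{m,n}`. -/
def HMat [Zero R] [One R] (m n : ℕ) : Matrix (Fin (m * m * n)) (Fin n) R :=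
  (EMat m n).transpose

/-- The circle in `Mat_F`: `E_{m,n} · H_{m,n} = m · 1_n` over a field of characteristic 0. -/
theorem EMat_mul_HMat {F : Type*} [Field F] [CharZero F] (m n : ℕ) (hm : 1 ≤ m)
    (hn : 1 ≤ n) :
    (EMat m n : Matrix (Fin n) (Fin (m * m * n)) F) * HMat m n =
      (m : F) • (1 : Matrix (Fin n) (Fin n) F) := by
  ext r r'
  change ∑ c, (EMat m n : Matrix (Fin n) (Fin (m * m * n)) F) r c * HMat m n c r' = _
  simp only [Matrix.mul_apply, HMat, Matrix.transpose_apply, EMat, Matrix.of_apply,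
    Matrix.smul_apply, Matrix.one_apply, smul_eq_mul]
  rcases eq_or_ne r r' with rfl | hne
  · rw [if_pos rfl, mul_one]
    have h1 : ∀ c : Fin (m*m*n),
        (if (c:ℕ)/n/m = (c:ℕ)/n % m ∧ (c:ℕ)%n = (r:ℕ) then (1:F) else 0) *
        (if (c:ℕ)/n/m = (c:ℕ)/n % m ∧ (c:ℕ)%n = (r:ℕ) then (1:F) else 0)
        = if (c:ℕ)/n/m = (c:ℕ)/n % m ∧ (c:ℕ)%n = (r:ℕ) then 1 else 0 := by
      intro c; split <;> simp
    rw [Finset.sum_congr rfl (fun c _ => h1 c), Finset.sum_boole]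
    norm_cast
    have hb : ∀ i : Fin m, ((i:ℕ)*m + i)*n + (r:ℕ) < m*m*n := by
      intro i
      have hi : (i:ℕ) < m := i.isLt
      have hq : (i:ℕ)*m + i < m*m := by nlinarith
      calc ((i:ℕ)*m + i)*n + r < ((i:ℕ)*m + i)*n + n := by omega
        _ = ((i:ℕ)*m + i + 1)*n := by ring
        _ ≤ m*m*n := Nat.mul_le_mul_right n hq
    have hdiv : ∀ i : Fin m, (((i:ℕ)*m + i)*n + (r:ℕ)) / n = (i:ℕ)*m + i := by
      intro i
      rw [show ((i:ℕ)*m + i)*n + (r:ℕ) = n*((i:ℕ)*m + i) + r by ring,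
        Nat.mul_add_div (by omega : 0 < n), Nat.div_eq_of_lt r.isLt, add_zero]
    have hmod : ∀ i : Fin m, (((i:ℕ)*m + i)*n + (r:ℕ)) % n = (r:ℕ) := by
      intro i
      rw [show ((i:ℕ)*m + i)*n + (r:ℕ) = (r:ℕ) + n*((i:ℕ)*m+i) by ring,
        Nat.add_mul_mod_self_left, Nat.mod_eq_of_lt r.isLt]
    have key : (Finset.filter
        (fun c : Fin (m*m*n) => (c:ℕ)/n/m = (c:ℕ)/n % m ∧ (c:ℕ)%n = (r:ℕ))
        Finset.univ).card = (Finset.univ : Finset (Fin m)).card := by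
      refine Finset.card_nbij'
        (fun c => (⟨(c:ℕ)/n % m, Nat.mod_lt _ (by omega)⟩ : Fin m))
        (fun i => (⟨((i:ℕ)*m + i)*n + (r:ℕ), hb i⟩ : Fin (m*m*n)))
        (fun c _ => Finset.mem_univ _) ?_ ?_ ?_
      · intro i _
        simp only [Finset.mem_coe, Finset.mem_filter, Finset.mem_univ, true_and]
        refine ⟨?_, hmod i⟩
        rw [hdiv i, show (i:ℕ)*m + i = i + i*m by ring,
          Nat.add_mul_div_right _ _ (by omega : 0 < m), Nat.div_eq_of_lt i.isLt,
          Nat.add_mul_mod_self_right, Nat.mod_eq_of_lt i.isLt]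
        omega
      · intro c hc
        simp only [Finset.mem_coe, Finset.mem_filter, Finset.mem_univ, true_and] at hc
        obtain ⟨hc1, hc2⟩ := hc
        apply Fin.ext
        simp only
        have : ((c:ℕ)/n % m * m + (c:ℕ)/n % m) = (c:ℕ)/n/m * m + (c:ℕ)/n % m := by
          rw [hc1]
        rw [this, Nat.div_add_mod', ← hc2, Nat.div_add_mod']
      · intro i _
        apply Fin.ext
        simp only
        rw [hdiv i, show (i:ℕ)*m + i = i + i*m by ring, Nat.add_mul_mod_self_right,
          Nat.mod_eq_of_lt i.isLt]
    rw [key, Finset.card_univ, Fintype.card_fin]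
  · rw [if_neg hne, mul_zero]
    apply Finset.sum_eq_zero
    intro c _
    rcases eq_or_ne ((c:ℕ)%n) (r:ℕ) with h | h
    · have h2 : ¬((c:ℕ)/n/m = (c:ℕ)/n % m ∧ (c:ℕ)%n = (r':ℕ)) := by
        rintro ⟨-, hh⟩; rw [h] at hh; exact hne (Fin.ext hh)
      rw [if_neg h2, mul_zero]
    · have h2 : ¬((c:ℕ)/n/m = (c:ℕ)/n % m ∧ (c:ℕ)%n = (r:ℕ)) := fun hc => h hc.2
      rw [if_neg h2, zero_mul]
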